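/- Let A be diagonalizable with all eigenvalues real and positive. Then G(A) ⊂ { z ∈ ℂ : Re z > 0 }, i.e., every element of the generalized two-sided field of values has positive real part. -/

import Mathlib

open Matrix

/-- The generalized two-sided field of values of `A`, relative to the
eigenvector matrix `V`. -/
def G {n : ℕ} (V A : Matrix (Fin n) (Fin n) ℂ) : Set ℂ :=
  {c | ∃ x y : Fin n → ℂ, y = (V * Vᴴ)⁻¹ *ᵥ x ∧ star y ⬝ᵥ x = 1 ∧
    c = star y ⬝ᵥ (A *ᵥ x)}

theorem stmt11 {n : ℕ} (V A : Matrix (Fin n) (Fin n) ℂ) (d : Fin n → ℝ)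
    (hV : IsUnit V.det)
    (hA : A = V * Matrix.diagonal (fun i => (d i : ℂ)) * V⁻¹)
    (hd : ∀ i, 0 < d i) :
    ∀ c ∈ G V A, 0 < c.re := by
  rintro c ⟨x, y, hy, h1, hc⟩
  have hVdet : IsUnit Vᴴ.det := by
    rwa [Matrix.det_conjTranspose, isUnit_star]
  set u : Fin n → ℂ := V⁻¹ *ᵥ x with hu
  have hM : (V * Vᴴ)⁻¹ = (V⁻¹)ᴴ * V⁻¹ := by
    rw [Matrix.mul_inv_rev, Matrix.conjTranspose_nonsing_inv]
  have hsy : ∀ v : Fin n → ℂ, star y ⬝ᵥ v = star u ᵥ* V⁻¹ ⬝ᵥ v := by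
    intro v
    rw [hy, hM, star_mulVec, Matrix.conjTranspose_mul, Matrix.conjTranspose_conjTranspose,
      ← Matrix.vecMul_vecMul, ← star_mulVec]
  have h1' : star u ⬝ᵥ u = 1 := by
    rw [← h1, hsy, ← Matrix.dotProduct_mulVec, ← hu]
  have hc' : c = star u ⬝ᵥ (Matrix.diagonal (fun i => (d i : ℂ)) *ᵥ u) := by
    rw [hc, hsy, Matrix.dotProduct_mulVec, Matrix.vecMul_vecMul, hA,
      ← Matrix.mul_assoc, ← Matrix.mul_assoc, Matrix.nonsing_inv_mul V hV, Matrix.one_mul,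
      ← Matrix.vecMul_vecMul, Matrix.dotProduct_mulVec, hu, Matrix.dotProduct_mulVec]
  have hterm : ∀ i, (star u i * (Matrix.diagonal (fun i => (d i : ℂ)) *ᵥ u) i).re
      = d i * Complex.normSq (u i) := by
    intro i
    simp only [Matrix.mulVec_diagonal, Pi.star_apply]
    have h : star (u i) * ((d i : ℂ) * u i) = ((d i * Complex.normSq (u i) : ℝ) : ℂ) := by
      rw [Complex.ofReal_mul, Complex.normSq_eq_conj_mul_self]
      simp [Complex.star_def]
      ring
    rw [h, Complex.ofReal_re]
  have hre : c.re = ∑ i, d i * Complex.normSq (u i) := by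
    rw [hc']
    simp only [dotProduct, Complex.re_sum]
    exact Finset.sum_congr rfl fun i _ => hterm i
  have h1re : ∑ i, Complex.normSq (u i) = 1 := by
    have := congrArg Complex.re h1'
    simpa [dotProduct, Complex.re_sum, Complex.normSq_eq_conj_mul_self,
      Complex.mul_conj, Complex.normSq_apply] using this
  have hex : ∃ i ∈ Finset.univ, 0 < d i * Complex.normSq (u i) := by
    by_contra h
    push_neg at h
    have hz : ∀ i, Complex.normSq (u i) = 0 := by
      intro i
      have := h i (Finset.mem_univ i)
      nlinarith [Complex.normSq_nonneg (u i), hd i]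
    simp [hz] at h1re
  rw [hre]
  exact Finset.sum_pos' (fun i _ => mul_nonneg (hd i).le (Complex.normSq_nonneg _)) hex
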